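/- Let {x_k}_{k≥1} be a sequence of nonnegative real numbers such that x_{k+1} ≤ x_k (1 − P/k^p) + Q/k^{p+q} for all k ≥ 1, where 0 < p ≤ 1, q > 0, P > 0, Q > 0, and additionally P > q in the case p = 1. Set R = P if p < 1 and R = P − q if p = 1. Then limsup_{k→∞} k^q · x_k ≤ Q/R; equivalently, x_k ≤ (Q/R)·k^{−q} + o(k^{−q}) as k → ∞. -/

import Mathlib

open Filter Real Finset Topology

private lemma aux_e_lim (q : ℝ) :
    Filter.Tendsto (fun k : ℕ => (1 + 1/(k:ℝ)) ^ q) Filter.atTop (nhds 1) := by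
  have h : Filter.Tendsto (fun k : ℕ => 1 + 1/(k:ℝ)) Filter.atTop (nhds 1) := by
    simpa using tendsto_const_nhds.add (tendsto_one_div_atTop_nhds_zero_nat (𝕜 := ℝ))
  simpa using h.rpow_const (p := q) (Or.inl one_ne_zero)

private lemma aux_slope (q : ℝ) :
    Filter.Tendsto (fun k : ℕ => (k:ℝ) * ((1 + 1/(k:ℝ)) ^ q - 1)) Filter.atTop (nhds q) := by
  have hderiv : HasDerivAt (fun x : ℝ => x ^ q) q 1 := by
    simpa using Real.hasDerivAt_rpow_const (x := 1) (p := q) (Or.inl one_ne_zero)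
  have hsl := hasDerivAt_iff_tendsto_slope.mp hderiv
  have hu : Filter.Tendsto (fun k : ℕ => 1 + 1/(k:ℝ)) Filter.atTop (𝓝[≠] 1) := by
    apply tendsto_nhdsWithin_of_tendsto_nhds_of_eventually_within
    · simpa using tendsto_const_nhds.add (tendsto_one_div_atTop_nhds_zero_nat (𝕜 := ℝ))
    · filter_upwards [eventually_ge_atTop 1] with k hk
      have hk0 : (0:ℝ) < (k:ℝ) := by exact_mod_cast hk
      have : (0:ℝ) < 1/(k:ℝ) := by positivity
      simp only [Set.mem_compl_singleton_iff]
      intro h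
      nlinarith
  refine (hsl.comp hu).congr' ?_
  filter_upwards [eventually_ge_atTop 1] with k hk
  have hk0 : (0:ℝ) < (k:ℝ) := by exact_mod_cast hk
  simp only [Function.comp_apply, slope_def_field, Real.one_rpow]
  have hne : (1 + 1/(k:ℝ) - 1) ≠ 0 := by
    have h : (0:ℝ) < 1/(k:ℝ) := by positivity
    intro hcon
    simp only [add_sub_cancel_left] at hcon
    rw [hcon] at h
    exact lt_irrefl _ h
  rw [div_eq_iff hne]
  field_simp
  ring

/-- Chung's lemma on recursive sequences. -/
theorem stmt_0 (x : ℕ → ℝ) (p q P Q R : ℝ)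
    (hp : 0 < p) (hp1 : p ≤ 1) (hq : 0 < q) (hP : 0 < P) (hQ : 0 < Q)
    (hPq : p = 1 → q < P)
    (hR : R = if p < 1 then P else P - q)
    (hx : ∀ k : ℕ, 1 ≤ k → 0 ≤ x k)
    (hrec : ∀ k : ℕ, 1 ≤ k →
      x (k + 1) ≤ x k * (1 - P / (k : ℝ) ^ p) + Q / (k : ℝ) ^ (p + q)) :
    Filter.limsup (fun k : ℕ => (k : ℝ) ^ q * x k) Filter.atTop ≤ Q / R := by
  have hR0 : 0 < R := by
    rcases lt_or_eq_of_le hp1 with h | h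
    · rw [hR, if_pos h]; exact hP
    · have := hPq h; rw [hR, if_neg (by linarith)]; linarith
  set y : ℕ → ℝ := fun k => (k : ℝ) ^ q * x k with hy_def
  have hy0 : ∀ k : ℕ, 1 ≤ k → 0 ≤ y k := fun k hk =>
    mul_nonneg (Real.rpow_nonneg (Nat.cast_nonneg k) q) (hx k hk)
  have cobdd : Filter.IsCoboundedUnder (· ≤ ·) Filter.atTop y := by
    apply Filter.isCoboundedUnder_le_of_eventually_le (x := 0) Filter.atTop
    filter_upwards [eventually_ge_atTop 1] with k hk using hy0 k hk
  -- the auxiliary limits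
  set e : ℕ → ℝ := fun k => (1 + 1/(k:ℝ)) ^ q with he_def
  have he : Filter.Tendsto e Filter.atTop (nhds 1) := aux_e_lim q
  have hkp : Filter.Tendsto (fun k : ℕ => (k:ℝ) ^ p) Filter.atTop Filter.atTop :=
    (tendsto_rpow_atTop hp).comp tendsto_natCast_atTop_atTop
  have hkp1 : Filter.Tendsto (fun k : ℕ => (k:ℝ) ^ (p - 1)) Filter.atTop
      (nhds (if p < 1 then 0 else 1)) := by
    split_ifs with h
    · have := (tendsto_rpow_neg_atTop (by linarith : (0:ℝ) < 1 - p)).comp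
        tendsto_natCast_atTop_atTop
      simpa [Function.comp_def, neg_sub] using this
    · have hp1' : p = 1 := le_antisymm hp1 (not_lt.mp h)
      simp [hp1']
  have hdlim : Filter.Tendsto (fun k : ℕ => (k:ℝ)^p * (1 - e k * (1 - P/(k:ℝ)^p)))
      Filter.atTop (nhds R) := by
    have h1 : Filter.Tendsto
        (fun k : ℕ => e k * P - (k:ℝ)^(p-1) * ((k:ℝ) * (e k - 1))) Filter.atTop
        (nhds (1 * P - (if p < 1 then 0 else 1) * q)) :=
      (he.mul_const P).sub (hkp1.mul (aux_slope q))
    have h2 : (1 * P - (if p < 1 then 0 else 1) * q) = R := by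
      rw [hR]; split_ifs <;> ring
    rw [h2] at h1
    refine h1.congr' ?_
    filter_upwards [eventually_ge_atTop 1] with k hk
    have hk0 : (0:ℝ) < (k:ℝ) := by exact_mod_cast hk
    have hkp0 : (0:ℝ) < (k:ℝ)^p := Real.rpow_pos_of_pos hk0 p
    have hsub : (k:ℝ)^(p-1) * (k:ℝ) = (k:ℝ)^p := by
      rw [Real.rpow_sub hk0, Real.rpow_one]; field_simp
    have expand : (k:ℝ)^p * (1 - e k * (1 - P/(k:ℝ)^p))
        = (k:ℝ)^p - (k:ℝ)^p * e k + e k * P := by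
      field_simp; ring
    rw [expand, ← hsub]; ring
  -- reduce to eventual bound
  refine le_of_forall_gt_imp_ge_of_dense fun c hc => ?_
  refine Filter.limsup_le_of_le cobdd ?_
  -- choose ε
  obtain ⟨ε, hε0, hεR, hεB⟩ : ∃ ε : ℝ, 0 < ε ∧ ε < R ∧ Q*(1+ε)/(R-ε) < c := by
    have hgt : Filter.Tendsto (fun ε : ℝ => Q*(1+ε)/(R-ε)) (𝓝[>] 0) (nhds (Q/R)) := by
      have hcont : ContinuousAt (fun ε : ℝ => Q*(1+ε)/(R-ε)) 0 := by
        apply ContinuousAt.div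
        · fun_prop
        · fun_prop
        · simpa using hR0.ne'
      have := hcont.tendsto
      simp only [add_zero, sub_zero, mul_one] at this
      exact this.mono_left nhdsWithin_le_nhds
    have h1 : ∀ᶠ ε in 𝓝[>] (0:ℝ), Q*(1+ε)/(R-ε) < c := hgt.eventually_lt_const hc
    have h2 : ∀ᶠ ε in 𝓝[>] (0:ℝ), ε < R :=
      Filter.Eventually.filter_mono nhdsWithin_le_nhds (eventually_lt_nhds hR0)
    have h3 : ∀ᶠ ε in 𝓝[>] (0:ℝ), 0 < ε :=
      eventually_mem_nhdsWithin.mono fun x hx => hx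
    obtain ⟨ε, hε⟩ := (h3.and (h2.and h1)).exists
    exact ⟨ε, hε.1, hε.2.1, hε.2.2⟩
  have hRε : 0 < R - ε := by linarith
  set B : ℝ := Q*(1+ε)/(R-ε) with hB_def
  have hBQ : 0 < B := by positivity
  set a : ℕ → ℝ := fun k => (R - ε)/(k:ℝ)^p with ha_def
  have ha_nonneg : ∀ k : ℕ, 0 ≤ a k := fun k =>
    div_nonneg hRε.le (Real.rpow_nonneg (Nat.cast_nonneg k) p)
  -- find K
  obtain ⟨K, hK⟩ : ∃ K : ℕ, ∀ k, K ≤ k → 1 ≤ k ∧ a k < 1 ∧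
      R - ε ≤ (k:ℝ)^p * (1 - e k * (1 - P/(k:ℝ)^p)) ∧ e k ≤ 1 + ε := by
    have hA : ∀ᶠ k : ℕ in Filter.atTop, R - ε < (k:ℝ)^p := hkp.eventually_gt_atTop _
    have hB' := hdlim.eventually_const_lt (show R - ε < R by linarith)
    have hC := he.eventually_lt_const (show (1:ℝ) < 1 + ε by linarith)
    have hall := ((eventually_ge_atTop 1).and (hA.and (hB'.and hC)))
    rw [eventually_atTop] at hall
    obtain ⟨K, hKa⟩ := hall
    refine ⟨K, fun k hk => ?_⟩
    obtain ⟨hk1, hk2, hk3, hk4⟩ := hKa k hk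
    have hk0 : (0:ℝ) < (k:ℝ) := by exact_mod_cast hk1
    have hkp0 : (0:ℝ) < (k:ℝ)^p := Real.rpow_pos_of_pos hk0 p
    exact ⟨hk1, (div_lt_one hkp0).mpr hk2, hk3.le, hk4.le⟩
  -- the key recursion in terms of y
  have hstep : ∀ k : ℕ, K ≤ k → y (k+1) ≤ y k * (1 - a k) + B * a k := by
    intro k hk
    obtain ⟨hk1, hak1, hd, he'⟩ := hK k hk
    have hk0 : (0:ℝ) < (k:ℝ) := by exact_mod_cast hk1
    have hkp0 : (0:ℝ) < (k:ℝ)^p := Real.rpow_pos_of_pos hk0 p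
    have hkq0 : (0:ℝ) < (k:ℝ)^q := Real.rpow_pos_of_pos hk0 q
    have hsplit : ((k+1:ℕ):ℝ)^q = (k:ℝ)^q * e k := by
      rw [he_def, ← Real.mul_rpow (le_of_lt hk0) (by positivity)]
      congr 1
      push_cast
      field_simp
    have h1 : y (k+1) ≤ (k:ℝ)^q * e k * (x k * (1 - P/(k:ℝ)^p) + Q/(k:ℝ)^(p+q)) := by
      rw [hy_def]
      simp only
      rw [hsplit]
      have hco : (0:ℝ) ≤ (k:ℝ)^q * e k := by
        apply mul_nonneg hkq0.le
        rw [he_def]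
        exact Real.rpow_nonneg (by positivity) q
      exact mul_le_mul_of_nonneg_left (hrec k hk1) hco
    have heq : (k:ℝ)^q * e k * (x k * (1 - P/(k:ℝ)^p) + Q/(k:ℝ)^(p+q))
        = y k * (e k * (1 - P/(k:ℝ)^p)) + Q * e k / (k:ℝ)^p := by
      rw [hy_def]
      simp only
      rw [Real.rpow_add hk0]
      field_simp
    rw [heq] at h1
    have h2 : e k * (1 - P/(k:ℝ)^p) ≤ 1 - a k := by
      have h2' : (R - ε)/(k:ℝ)^p ≤ 1 - e k * (1 - P/(k:ℝ)^p) := by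
        rw [div_le_iff₀ hkp0]
        nlinarith [hd]
      have hak : a k = (R - ε)/(k:ℝ)^p := rfl
      linarith
    have h3 : y k * (e k * (1 - P/(k:ℝ)^p)) ≤ y k * (1 - a k) :=
      mul_le_mul_of_nonneg_left h2 (hy0 k hk1)
    have h4 : Q * e k / (k:ℝ)^p ≤ B * a k := by
      have hBa : B * a k = (Q * (1+ε)) / (k:ℝ)^p := by
        simp only [hB_def, ha_def]
        field_simp
      rw [hBa]
      have hnum : Q * e k ≤ Q * (1+ε) := mul_le_mul_of_nonneg_left he' hQ.le
      exact (div_le_div_iff_of_pos_right hkp0).mpr hnum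
    linarith
  -- z and its recursion
  set z : ℕ → ℝ := fun k => y k - B with hz_def
  have hza : ∀ k : ℕ, K ≤ k → z (k+1) ≤ z k * (1 - a k) := by
    intro k hk
    have := hstep k hk
    simp only [hz_def]
    nlinarith [this]
  set δ : ℝ := c - B with hδ_def
  have hδ0 : 0 < δ := by rw [hδ_def]; linarith
  -- divergence of partial sums of a
  have hS : Filter.Tendsto (fun n : ℕ => ∑ j ∈ Finset.Ico K n, a j)
      Filter.atTop Filter.atTop := by
    have hge : ∀ j : ℕ, (R - ε) * (1/(j:ℝ)) ≤ a j := by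
      intro j
      rcases Nat.eq_zero_or_pos j with rfl | hj
      · simp [ha_def, Real.zero_rpow hp.ne']
      · have hj0 : (0:ℝ) < (j:ℝ) := by exact_mod_cast hj
        have hjp0 : (0:ℝ) < (j:ℝ)^p := Real.rpow_pos_of_pos hj0 p
        have hple : (j:ℝ)^p ≤ (j:ℝ) := by
          have h1j : (1:ℝ) ≤ (j:ℝ) := by exact_mod_cast hj
          calc (j:ℝ)^p ≤ (j:ℝ)^(1:ℝ) := Real.rpow_le_rpow_of_exponent_le h1j hp1
            _ = (j:ℝ) := Real.rpow_one _
        rw [ha_def]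
        simp only
        rw [mul_one_div]
        exact div_le_div_of_nonneg_left hRε.le hjp0 hple
    have hT : Filter.Tendsto (fun n : ℕ => ∑ j ∈ Finset.range n, (R - ε) * (1/(j:ℝ)))
        Filter.atTop Filter.atTop := by
      have hns : ¬ Summable (fun j : ℕ => (R - ε) * (1/(j:ℝ))) := by
        intro hsum
        have := hsum.mul_left (R - ε)⁻¹
        simp only [← mul_assoc, inv_mul_cancel₀ hRε.ne', one_mul] at this
        exact Real.not_summable_one_div_natCast this
      have hnn : ∀ j : ℕ, 0 ≤ (R - ε) * (1/(j:ℝ)) := fun j => by positivity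
      exact (not_summable_iff_tendsto_nat_atTop_of_nonneg hnn).mp hns
    have hT2 : Filter.Tendsto (fun n : ℕ => ∑ j ∈ Finset.Ico K n, (R - ε) * (1/(j:ℝ)))
        Filter.atTop Filter.atTop := by
      have heq : ∀ᶠ n : ℕ in Filter.atTop,
          (∑ j ∈ Finset.range n, (R - ε) * (1/(j:ℝ)))
            - (∑ j ∈ Finset.range K, (R - ε) * (1/(j:ℝ)))
          = ∑ j ∈ Finset.Ico K n, (R - ε) * (1/(j:ℝ)) := by
        filter_upwards [eventually_ge_atTop K] with n hn
        rw [Finset.sum_Ico_eq_sub _ hn]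
      exact Filter.Tendsto.congr' heq
        (Filter.tendsto_atTop_add_const_right _ _ hT)
    refine Filter.tendsto_atTop_mono' _ ?_ hT2
    filter_upwards with n
    exact Finset.sum_le_sum fun j _ => hge j
  -- there exists some index where z drops below δ
  obtain ⟨n₀, hn₀K, hn₀⟩ : ∃ n₀, K ≤ n₀ ∧ z n₀ < δ := by
    by_contra h
    push_neg at h
    have hdec : ∀ n, K ≤ n → z n ≤ z K - δ * ∑ j ∈ Finset.Ico K n, a j := by
      intro n hn
      induction n, hn using Nat.le_induction with
      | base => simp
      | succ n hn ih =>
        have hzn : δ ≤ z n := h n hn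
        have h1 := hza n hn
        have h2 : z (n+1) ≤ z n - δ * a n := by nlinarith [ha_nonneg n]
        rw [Finset.sum_Ico_succ_top hn]
        nlinarith
    have hbig : ∀ᶠ n : ℕ in Filter.atTop,
        z K - δ < δ * ∑ j ∈ Finset.Ico K n, a j :=
      (hS.const_mul_atTop hδ0).eventually_gt_atTop _
    obtain ⟨n, hnK, hn⟩ := ((eventually_ge_atTop K).and hbig).exists
    have := hdec n hnK
    have := h n hnK
    linarith
  -- absorption: once below δ, stays below δ
  have habs : ∀ n, n₀ ≤ n → z n < δ := by
    intro n hn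
    induction n, hn using Nat.le_induction with
    | base => exact hn₀
    | succ n hn ih =>
      have hKn : K ≤ n := le_trans hn₀K hn
      have h1 := hza n hKn
      have h2 : a n < 1 := (hK n hKn).2.1
      have h3 := ha_nonneg n
      rcases le_or_gt 0 (z n) with hz0 | hz0
      · have := mul_le_mul_of_nonneg_left (show 1 - a n ≤ 1 by linarith) hz0
        rw [mul_one] at this
        linarith
      · have := mul_nonpos_of_nonpos_of_nonneg hz0.le (show (0:ℝ) ≤ 1 - a n by linarith)
        linarith
  filter_upwards [eventually_ge_atTop n₀] with n hn
  have := habs n hn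
  simp only [hz_def] at this
  linarith
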